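/- For every real number u and every angle α ∈ [0, π], if u ≥ cos α then α ≥ π/2 - u - 36·|u|^(3/2). -/

import Mathlib

open Real

theorem angle_lower_bound_of_cos_le (u α : ℝ) (hα0 : 0 ≤ α) (hαπ : α ≤ π)
    (h : u ≥ Real.cos α) :
    α ≥ π / 2 - u - 36 * |u| ^ ((3 : ℝ) / 2) := by
  have h1 : (-1 : ℝ) ≤ u := le_trans (Real.neg_one_le_cos α) h
  have hpi : π ≤ 4 := Real.pi_le_four
  rcases le_or_gt 1 u with hu1 | hu1
  · -- u ≥ 1 : RHS is negative
    have habs : |u| = u := abs_of_nonneg (by linarith)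
    have h36 : (1 : ℝ) ≤ |u| ^ ((3 : ℝ) / 2) := by
      rw [habs]
      exact Real.one_le_rpow hu1 (by norm_num)
    nlinarith
  · rcases le_or_gt u 0 with hu0 | hu0
    · -- -1 ≤ u ≤ 0
      have habs : |u| = -u := abs_of_nonpos hu0
      have harcsin : Real.arcsin u ≤ u := by
        have hv : -u ≤ Real.arcsin (-u) := by
          have h0 : 0 ≤ Real.arcsin (-u) := Real.arcsin_nonneg.2 (by linarith)
          have := Real.sin_le h0
          rwa [Real.sin_arcsin (by linarith) (by linarith)] at this
        rw [← neg_neg u, Real.arcsin_neg]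
        linarith
      have hα : Real.arccos u ≤ α := by
        rw [← Real.arccos_cos hα0 hαπ, Real.arccos_eq_pi_div_two_sub_arcsin,
          Real.arccos_eq_pi_div_two_sub_arcsin]
        have := Real.monotone_arcsin h
        linarith
      rw [Real.arccos_eq_pi_div_two_sub_arcsin] at hα
      have hrpow : 0 ≤ |u| ^ ((3 : ℝ) / 2) := Real.rpow_nonneg (abs_nonneg u) _
      linarith
    · -- 0 < u < 1
      have habs : |u| = u := abs_of_nonneg hu0.le
      rw [habs]
      set e := u ^ ((3 : ℝ) / 2) with he
      have he0 : 0 < e := Real.rpow_pos_of_pos hu0 _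
      have he2 : e ^ 2 = u ^ 3 := by
        rw [he, ← Real.rpow_natCast (u ^ ((3 : ℝ) / 2)) 2, ← Real.rpow_mul hu0.le,
          ← Real.rpow_natCast u 3]
        norm_num
      have he1 : e ≤ 1 := Real.rpow_le_one hu0.le hu1.le (by norm_num)
      -- it suffices that arcsin u ≤ u + 36 * e
      have hα : Real.arccos u ≤ α := by
        rw [← Real.arccos_cos hα0 hαπ, Real.arccos_eq_pi_div_two_sub_arcsin,
          Real.arccos_eq_pi_div_two_sub_arcsin]
        have := Real.monotone_arcsin h
        linarith
      rw [Real.arccos_eq_pi_div_two_sub_arcsin] at hα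
      have key : Real.arcsin u ≤ u + 36 * e := by
        rcases le_or_gt (π / 2) (u + 36 * e) with hs | hs
        · exact le_trans (Real.arcsin_le_pi_div_two u) hs
        · -- then 36 e < π/2 ≤ 2, so e < 1/18, u^3 = e^2 < 1/324 < 1/125, so u < 1/5
          have hesmall : e < 1 / 18 := by nlinarith
          have hu5 : u < 1 / 5 := by
            by_contra hcon
            push_neg at hcon
            have h3 : (1/5 : ℝ) ^ 3 ≤ u ^ 3 := pow_le_pow_left₀ (by norm_num) hcon 3
            nlinarith
          have hx1 : u + u ^ 3 ≤ 1 := by nlinarith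
          have hx0 : 0 < u + u ^ 3 := by positivity
          have hsin := Real.sin_gt_sub_cube hx0
          have hsq : u ^ 2 < 1 / 25 := by nlinarith
          have h26 : u + u ^ 3 ≤ (26 / 25) * u := by
            nlinarith [mul_le_mul_of_nonneg_left hsq.le hu0.le]
          have hc3 : (u + u ^ 3) ^ 3 ≤ ((26 / 25) * u) ^ 3 :=
            pow_le_pow_left₀ (by positivity) h26 3
          have hring : ((26 / 25) * u) ^ 3 = (17576 / 15625) * u ^ 3 := by ring
          have hu3 : 0 ≤ u ^ 3 := by positivity
          have hsinu : u ≤ Real.sin (u + u ^ 3) := by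
            rw [hring] at hc3
            linarith
          have : Real.arcsin u ≤ u + u ^ 3 := by
            have := Real.monotone_arcsin hsinu
            rwa [Real.arcsin_sin (by linarith [Real.pi_gt_three])
              (by linarith [Real.pi_gt_three])] at this
          have hcube : u ^ 3 ≤ 36 * e := by nlinarith
          linarith
      linarith
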